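/- Let (X, ≼) be a quasi-ordered set. The following are equivalent: (1) every increasing chain of chains ((x^γ_β)_{β<α_γ})_{γ<δ} in IC(X, ≼) has an upper bound in IC(X, ≼); (2) every increasing chain of chains ((x^γ_β)_{β<α})_{γ<δ} in IC(X, ≼) in which all member chains are indexed by the same ordinal α and which satisfies α ≠ δ, cof((x^γ_β)_{β<α}) = α > 1 for every γ < δ, and cof(((x^γ_β)_{β<α})_{γ<δ}) = δ > 1 (this last cofinality computed in the quasi-order (IC(X, ≼), ⊑)), has an upper bound in IC(X, ≼). -/

import Mathlib

set_option linter.deprecated false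
set_option linter.unusedVariables false
set_option linter.unusedSectionVars false
set_option maxHeartbeats 1000000



universe u

/-- An increasing chain in a quasi-ordered set `(X, r)`: an ordinal `len` together with a
family of elements of `X` indexed by the ordinals below `len`, such that `β < γ` implies
`x_β ≺ x_γ` (i.e. `x_β ≼ x_γ` and not `x_γ ≼ x_β`). -/
structure IncChain (X : Type u) (r : X → X → Prop) : Type (u + 1) where
  len : Ordinal.{u}
  val : (β : Ordinal.{u}) → β < len → X
  inc : ∀ (β γ : Ordinal.{u}) (hβ : β < len) (hγ : γ < len), β < γ →
    r (val β hβ) (val γ hγ) ∧ ¬ r (val γ hγ) (val β hβ)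

namespace IncChain

variable {X : Type u} {r : X → X → Prop}

/-- The domination quasi-order `⊑` on increasing chains. -/
def Le (A B : IncChain X r) : Prop :=
  ∀ (β : Ordinal.{u}) (hβ : β < A.len), ∃ (γ : Ordinal.{u}) (hγ : γ < B.len),
    r (A.val β hβ) (B.val γ hγ)

/-- The equivalence `≐` induced by `⊑`. -/
def Equiv (A B : IncChain X r) : Prop := A.Le B ∧ B.Le A

/-- `A ⊆ B`: every element of the chain `A` occurs in the chain `B`. -/
def Subset (A B : IncChain X r) : Prop :=
  ∀ (β : Ordinal.{u}) (hβ : β < A.len), ∃ (γ : Ordinal.{u}) (hγ : γ < B.len),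
    B.val γ hγ = A.val β hβ

/-- `A` is cofinal in `B`. -/
def Cofinal (A B : IncChain X r) : Prop := A.Subset B ∧ B.Le A

/-- The cofinality of a chain: the least ordinal indexing a chain cofinal in it. -/
noncomputable def cof (B : IncChain X r) : Ordinal.{u} :=
  sInf {α : Ordinal.{u} | ∃ A : IncChain X r, A.len = α ∧ A.Cofinal B}

/-- A maximal chain. -/
def Maximal (A : IncChain X r) : Prop := ∀ B : IncChain X r, A.Le B → B.Le A

end IncChain

/-! ### Auxiliary lemmas -/

namespace IncChain

universe v
variable {X : Type v} {r : X → X → Prop}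

def emptyChain : IncChain X r :=
  ⟨0, fun β hβ => (not_lt_zero hβ).elim, fun β γ hβ _ _ => (not_lt_zero hβ).elim⟩

@[simp] theorem emptyChain_len : (emptyChain : IncChain X r).len = 0 := rfl

section Basic
set_option linter.unusedVariables false
set_option linter.unusedSectionVars false



theorem le_refl' (hrefl : ∀ x, r x x) (A : IncChain X r) : A.Le A := fun β hβ => ⟨β, hβ, hrefl _⟩

theorem le_trans' (htrans : ∀ a b c, r a b → r b c → r a c) {A B C : IncChain X r} (h1 : A.Le B) (h2 : B.Le C) : A.Le C := by
  intro β hβ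
  obtain ⟨γ, hγ, h⟩ := h1 β hβ
  obtain ⟨δ, hδ, h'⟩ := h2 γ hγ
  exact ⟨δ, hδ, htrans _ _ _ h h'⟩

theorem subset_le (hrefl : ∀ x, r x x) {A B : IncChain X r} (h : A.Subset B) : A.Le B := by
  intro β hβ
  obtain ⟨γ, hγ, h⟩ := h β hβ
  exact ⟨γ, hγ, h ▸ hrefl _⟩

theorem subset_trans' {A B C : IncChain X r} (h1 : A.Subset B) (h2 : B.Subset C) :
    A.Subset C := by
  intro β hβ
  obtain ⟨γ, hγ, h⟩ := h1 β hβ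
  obtain ⟨δ, hδ, h'⟩ := h2 γ hγ
  exact ⟨δ, hδ, h'.trans h⟩

theorem cofinal_refl (hrefl : ∀ x, r x x) (A : IncChain X r) : A.Cofinal A :=
  ⟨fun β hβ => ⟨β, hβ, rfl⟩, le_refl' hrefl A⟩

theorem val_le_val (hrefl : ∀ x, r x x) (A : IncChain X r) {β γ} (hβ : β < A.len) (hγ : γ < A.len) (h : β ≤ γ) :
    r (A.val β hβ) (A.val γ hγ) := by
  rcases lt_or_eq_of_le h with h' | h'
  · exact (A.inc _ _ hβ hγ h').1
  · subst h'; exact hrefl _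

theorem cof_spec (hrefl : ∀ x, r x x) (B : IncChain X r) : ∃ A : IncChain X r, A.len = B.cof ∧ A.Cofinal B := by
  have hne : {α : Ordinal.{v} | ∃ A : IncChain X r, A.len = α ∧ A.Cofinal B}.Nonempty :=
    ⟨B.len, B, rfl, cofinal_refl hrefl B⟩
  exact csInf_mem hne

theorem cof_le {A B : IncChain X r} (h : A.Cofinal B) : B.cof ≤ A.len :=
  csInf_le' ⟨A, rfl, h⟩

theorem cof_le_len (hrefl : ∀ x, r x x) (B : IncChain X r) : B.cof ≤ B.len := cof_le (cofinal_refl hrefl B)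

theorem cofinal_trans (hrefl : ∀ x, r x x) (htrans : ∀ a b c, r a b → r b c → r a c) {A B C : IncChain X r} (h1 : A.Cofinal B) (h2 : B.Cofinal C) :
    A.Cofinal C :=
  ⟨subset_trans' h1.1 h2.1, le_trans' htrans h2.2 h1.2⟩

theorem cof_of_min (hrefl : ∀ x, r x x) (htrans : ∀ a b c, r a b → r b c → r a c) {A B : IncChain X r} (h : A.Cofinal B) (hlen : A.len = B.cof) :
    A.cof = A.len := by
  refine le_antisymm (cof_le_len hrefl A) (le_csInf ⟨A.len, A, rfl, cofinal_refl hrefl A⟩ ?_)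
  rintro α ⟨A', rfl, hA'⟩
  rw [hlen]
  exact cof_le (cofinal_trans hrefl htrans hA' h)

theorem len_eq_zero_of_le {A B : IncChain X r} (h : A.Le B) (hB : B.len = 0) :
    A.len = 0 := by
  by_contra h0
  obtain ⟨γ, hγ, -⟩ := h 0 (pos_iff_ne_zero.2 h0)
  rw [hB] at hγ
  exact not_lt_zero hγ

theorem cof_eq_zero_iff (hrefl : ∀ x, r x x) (B : IncChain X r) : B.cof = 0 ↔ B.len = 0 := by
  constructor
  · intro h
    obtain ⟨A, hlen, hA⟩ := cof_spec hrefl B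
    exact len_eq_zero_of_le hA.2 (hlen.trans h)
  · intro h
    refine le_antisymm ?_ zero_le
    refine cof_le (A := emptyChain) ⟨fun β hβ => (not_lt_zero hβ).elim,
      fun β hβ => ?_⟩
    rw [h] at hβ; exact (not_lt_zero hβ).elim

theorem cof_le_one_of_top (hrefl : ∀ x, r x x) {B : IncChain X r}
    (h : ∃ (β₀ : Ordinal.{v}) (hβ₀ : β₀ < B.len), ∀ β hβ, r (B.val β hβ) (B.val β₀ hβ₀)) :
    B.cof ≤ 1 := by
  obtain ⟨β₀, hβ₀, htop⟩ := h
  have h01 : (0 : Ordinal.{v}) < 1 := zero_lt_one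
  refine cof_le (A := ⟨1, fun _ _ => B.val β₀ hβ₀, ?_⟩) ⟨?_, ?_⟩
  · intro β γ hβ hγ hlt
    exact (not_lt_zero ((Ordinal.lt_one_iff_zero.1 hγ) ▸ hlt)).elim
  · intro β hβ
    exact ⟨β₀, hβ₀, rfl⟩
  · intro β hβ
    exact ⟨0, h01, htop β hβ⟩

theorem exists_top_of_cof_succ (hrefl : ∀ x, r x x) (htrans : ∀ a b c, r a b → r b c → r a c) {B : IncChain X r} {s : Ordinal.{v}}
    (h : B.cof = Order.succ s) :
    ∃ (β₀ : Ordinal.{v}) (hβ₀ : β₀ < B.len), ∀ β hβ, r (B.val β hβ) (B.val β₀ hβ₀) := by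
  obtain ⟨A, hlen, hA⟩ := cof_spec hrefl B
  rw [h] at hlen
  have hs : s < A.len := hlen ▸ Order.lt_succ s
  obtain ⟨β₀, hβ₀, heq⟩ := hA.1 s hs
  refine ⟨β₀, hβ₀, fun β hβ => ?_⟩
  obtain ⟨γ, hγ, hr⟩ := hA.2 β hβ
  have hγs : γ ≤ s := by
    rw [hlen] at hγ; exact Order.lt_succ_iff.1 hγ
  have := val_le_val hrefl A hγ hs hγs
  rw [← heq] at this
  exact htrans _ _ _ hr this

theorem cof_trichotomy (hrefl : ∀ x, r x x) (htrans : ∀ a b c, r a b → r b c → r a c) (B : IncChain X r) :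
    B.cof = 0 ∨ B.cof = 1 ∨ Order.IsSuccLimit (B.cof) := by
  rcases Ordinal.zero_or_succ_or_isSuccLimit B.cof with h | ⟨s, hs⟩ | h
  · exact Or.inl h
  · refine Or.inr (Or.inl ?_)
    replace hs := hs.symm
    have h1 : B.cof ≤ 1 := cof_le_one_of_top hrefl (exists_top_of_cof_succ hrefl htrans hs)
    have : s = 0 := by
      have := hs ▸ h1
      rw [Order.succ_le_iff] at this
      exact Ordinal.lt_one_iff_zero.1 this
    rw [hs, this]
    simp
  · exact Or.inr (Or.inr h)

/-- ordinal-regularity of the length of a minimal-length cofinal chain -/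
theorem cof_ord_eq (hrefl : ∀ x, r x x) {B : IncChain X r} (h : B.cof = B.len) (hlim : Order.IsSuccLimit B.len) :
    (B.len.cof).ord = B.len := by
  obtain ⟨f, hf⟩ := Ordinal.exists_fundamental_sequence B.len
  have hflt : ∀ i (hi : i < B.len.cof.ord), f i hi < B.len := by
    intro i hi
    rw [← hf.blsub_eq]
    exact Ordinal.lt_blsub f i hi
  have hC : ∃ C : IncChain X r, C.len = B.len.cof.ord ∧ C.Cofinal B := by
    refine ⟨⟨B.len.cof.ord, fun i hi => B.val (f i hi) (hflt i hi), ?_⟩, rfl, ?_, ?_⟩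
    · intro β γ hβ hγ hlt
      exact B.inc _ _ _ _ (hf.strict_mono hβ hγ hlt)
    · intro β hβ
      exact ⟨f β hβ, hflt β hβ, rfl⟩
    · intro β hβ
      have : β < Ordinal.blsub _ f := by rw [hf.blsub_eq]; exact hβ
      obtain ⟨i, hi, hle⟩ := Ordinal.lt_blsub_iff.1 this
      exact ⟨i, hi, val_le_val hrefl B hβ (hflt i hi) hle⟩
  obtain ⟨C, hClen, hCcof⟩ := hC
  have h1 : B.cof ≤ B.len.cof.ord := hClen ▸ cof_le hCcof
  have h2 : B.len.cof.ord ≤ B.len := (Cardinal.ord_le_ord.2 (Ordinal.cof_le_card _)).trans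
    (Cardinal.ord_card_le _)
  exact le_antisymm h2 (h ▸ h1)

end Basic

end IncChain
/-! ### Ordinal combinatorics -/

theorem aux_le_of_forall_lt {j x : Ordinal.{v}} (h : ∀ i < j, i < x) : j ≤ x := by
  by_contra hc
  push_neg at hc
  exact lt_irrefl x (h x hc)

theorem aux_sm_le {δ : Ordinal.{v}} {f : Ordinal.{v} → Ordinal.{v}}
    (h : ∀ i j, i < j → j < δ → f i < f j) : ∀ j < δ, j ≤ f j := by
  intro j
  induction j using Ordinal.induction with
  | h j IH =>
    intro hj
    refine aux_le_of_forall_lt fun i hi => ?_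
    exact lt_of_le_of_lt (IH i hi (hi.trans hj)) (h i j hi hj)

theorem reg_bsup {δ : Ordinal.{v}} (hreg : δ.cof.ord = δ) {j : Ordinal.{v}} (hj : j < δ)
    (f : ∀ i < j, Ordinal.{v}) (hf : ∀ i hi, f i hi < δ) : Ordinal.bsup j f < δ := by
  apply Ordinal.bsup_lt_ord _ hf
  rw [← hreg] at hj
  exact Cardinal.lt_ord.1 hj

noncomputable def seqF (δ : Ordinal.{v}) (S : Set Ordinal.{v})
    (bnd : Ordinal.{v} → Ordinal.{v}) : Ordinal.{v} → Ordinal.{v} :=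
  Ordinal.lt_wf.fix
    (fun j rec => sInf {γ | γ < δ ∧ γ ∈ S ∧ ∀ i (hi : i < j), rec i hi < γ ∧ bnd (rec i hi) ≤ γ})

theorem seqF_eq (δ : Ordinal.{v}) (S : Set Ordinal.{v}) (bnd : Ordinal.{v} → Ordinal.{v})
    (j : Ordinal.{v}) :
    seqF δ S bnd j = sInf {γ | γ < δ ∧ γ ∈ S ∧
      ∀ i (hi : i < j), seqF δ S bnd i < γ ∧ bnd (seqF δ S bnd i) ≤ γ} :=
  WellFounded.fix_eq _ _ j

theorem exists_seq {δ : Ordinal.{v}} (hreg : δ.cof.ord = δ) (hlim : Order.IsSuccLimit δ)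
    (S : Set Ordinal.{v}) (bnd : Ordinal.{v} → Ordinal.{v})
    (hbnd : ∀ γ < δ, bnd γ < δ)
    (hS : ∀ η < δ, ∃ γ, η ≤ γ ∧ γ < δ ∧ γ ∈ S) :
    ∃ e : Ordinal.{v} → Ordinal.{v},
      (∀ j < δ, e j < δ ∧ e j ∈ S ∧ j ≤ e j) ∧
      (∀ i j, i < j → j < δ → e i < e j ∧ bnd (e i) ≤ e j) := by
  set e := seqF δ S bnd with he
  have key : ∀ j < δ, e j < δ ∧ e j ∈ S ∧ ∀ i (hi : i < j), e i < e j ∧ bnd (e i) ≤ e j := by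
    intro j
    induction j using Ordinal.induction with
    | h j IH =>
      intro hj
      have hM : Ordinal.bsup j (fun i hi => max (e i + 1) (bnd (e i))) < δ := by
        refine reg_bsup hreg hj _ fun i hi => ?_
        have h1 : e i < δ := (IH i hi (hi.trans hj)).1
        refine max_lt ?_ (hbnd _ h1)
        rw [Ordinal.add_one_eq_succ]
        exact hlim.succ_lt h1
      obtain ⟨γ', hγ1, hγ2, hγ3⟩ := hS _ hM
      have hmem : γ' ∈ {γ | γ < δ ∧ γ ∈ S ∧
          ∀ i (hi : i < j), e i < γ ∧ bnd (e i) ≤ γ} := by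
        refine ⟨hγ2, hγ3, fun i hi => ?_⟩
        have hle : max (e i + 1) (bnd (e i)) ≤ γ' :=
          le_trans (Ordinal.le_bsup _ i hi) hγ1
        constructor
        · calc e i < e i + 1 := lt_add_one _
            _ ≤ γ' := le_trans (le_max_left _ _) hle
        · exact le_trans (le_max_right _ _) hle
      have hsm : e j ∈ {γ | γ < δ ∧ γ ∈ S ∧
          ∀ i (hi : i < j), e i < γ ∧ bnd (e i) ≤ γ} := by
        rw [he, seqF_eq]
        exact csInf_mem ⟨γ', hmem⟩
      exact ⟨hsm.1, hsm.2.1, hsm.2.2⟩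
  have hmono : ∀ i j, i < j → j < δ → e i < e j := fun i j hij hj => ((key j hj).2.2 i hij).1
  exact ⟨e, fun j hj => ⟨(key j hj).1, (key j hj).2.1, aux_sm_le hmono j hj⟩,
    fun i j hij hj => (key j hj).2.2 i hij⟩

/-! ### Descending a chain indexed by a `(v+1)`-ordinal to universe `v` -/

theorem exists_ord_down {X : Type v} {δ : Ordinal.{v + 1}} (b : ∀ γ, γ < δ → X)
    (hinj : ∀ γ γ' hγ hγ', b γ hγ = b γ' hγ' → γ = γ') :
    ∃ δ' : Ordinal.{v}, Ordinal.lift.{v + 1} δ' = δ := by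
  have h1 : δ.card ≤ Cardinal.lift.{v + 1} (Cardinal.mk X) := by
    rw [← Cardinal.mk_toType δ, ← Cardinal.mk_uLift]
    refine Cardinal.mk_le_of_injective
      (f := fun t => (⟨b ((Ordinal.ToType.mk (o := δ)).symm t).1
        ((Ordinal.ToType.mk (o := δ)).symm t).2⟩ : ULift.{v + 1} X)) ?_
    intro t t' h
    have := hinj _ _ _ _ (congrArg ULift.down h)
    have h2 : ((Ordinal.ToType.mk (o := δ)).symm t) = ((Ordinal.ToType.mk (o := δ)).symm t') :=
      Subtype.ext this
    exact (Ordinal.ToType.mk (o := δ)).symm.injective h2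
  have h3 : δ < (Order.succ δ.card).ord := Cardinal.lt_ord_succ_card δ
  have h4 : (Order.succ δ.card).ord ≤ (Order.succ (Cardinal.lift.{v + 1} (Cardinal.mk X))).ord :=
    Cardinal.ord_le_ord.2 (Order.succ_le_succ h1)
  have h5 : (Order.succ (Cardinal.lift.{v + 1} (Cardinal.mk X))).ord
      = Ordinal.lift.{v + 1} (Order.succ (Cardinal.mk X)).ord := by
    rw [← Cardinal.lift_succ, ← Cardinal.lift_ord]
  obtain ⟨δ', -, hδ'⟩ := Ordinal.lt_lift_iff.1 (lt_of_lt_of_le h3 (h4.trans_eq h5))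
  exact ⟨δ', hδ'⟩

theorem chain_down {X : Type v} {r : X → X → Prop} (hrefl : ∀ x, r x x)
    {δ : Ordinal.{v + 1}} (b : ∀ γ, γ < δ → X)
    (hinc : ∀ γ γ' hγ hγ', γ < γ' → r (b γ hγ) (b γ' hγ') ∧ ¬ r (b γ' hγ') (b γ hγ)) :
    ∃ B : IncChain X r, ∀ γ hγ, ∃ (j : Ordinal.{v}) (hj : j < B.len), B.val j hj = b γ hγ := by
  have hinj : ∀ γ γ' hγ hγ', b γ hγ = b γ' hγ' → γ = γ' := by
    intro γ γ' hγ hγ' h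
    rcases lt_trichotomy γ γ' with hlt | heq | hlt
    · exact absurd (h ▸ hrefl (b γ hγ)) (by have := (hinc γ γ' hγ hγ' hlt).2; rw [← h] at this ⊢; exact (h ▸ this))
    · exact heq
    · exact absurd (h ▸ hrefl (b γ hγ)) (by have := (hinc γ' γ hγ' hγ hlt).2; rw [h] at this; exact (h ▸ this))
  obtain ⟨δ', hδ'⟩ := exists_ord_down b hinj
  have hlt : ∀ {j : Ordinal.{v}}, j < δ' → Ordinal.lift.{v + 1} j < δ := by
    intro j hj
    rw [← hδ']
    exact Ordinal.lift_lt.2 hj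
  refine ⟨⟨δ', fun j hj => b (Ordinal.lift.{v + 1} j) (hlt hj), fun β γ hβ hγ h =>
    hinc _ _ _ _ (Ordinal.lift_lt.2 h)⟩, ?_⟩
  intro γ hγ
  have hγ' : γ < Ordinal.lift.{v + 1} δ' := hδ' ▸ hγ
  obtain ⟨j, hj, hlift⟩ := Ordinal.lt_lift_iff.1 hγ'
  refine ⟨j, hj, ?_⟩
  simp only
  congr 1
/-! ### The diagonal construction -/

section Diag

variable {X : Type v} {r : X → X → Prop}
variable (κ : Ordinal.{v}) (hκlim : Order.IsSuccLimit κ)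
variable (A : ∀ j < κ, IncChain X r)
variable (hlen : ∀ j hj, (A j hj).len = κ)
variable (hLe : ∀ i j (hi : i < κ) (hj : j < κ), i ≤ j → (A i hi).Le (A j hj))

noncomputable def pickPos1 (i j : Ordinal.{v}) (hi : i < j) (hj : j < κ) (x : Ordinal.{v}) :
    Ordinal.{v} :=
  if h : x < (A i (hi.trans hj)).len then (hLe i j (hi.trans hj) hj hi.le x h).choose
  else 0

noncomputable def pickPos2 (i j : Ordinal.{v}) (hi : i < j) (hj : j < κ)
    (β : Ordinal.{v}) (hβ : β < j) : Ordinal.{v} :=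
  (hLe i j (hi.trans hj) hj hi.le β (by rw [hlen]; exact hβ.trans hj)).choose

noncomputable def diagQ : Ordinal.{v} → Ordinal.{v} :=
  Ordinal.lt_wf.fix fun j rec =>
    if hj : j < κ then
      Order.succ (max
        (Ordinal.bsup j fun i hi => pickPos1 κ A hLe i j hi hj (rec i hi))
        (Ordinal.bsup j fun i hi => Ordinal.bsup j fun β hβ =>
          pickPos2 κ A hlen hLe i j hi hj β hβ))
    else 0

include hlen in
theorem diagQ_eq (j : Ordinal.{v}) :
    diagQ κ A hlen hLe j =
      if hj : j < κ then
        Order.succ (max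
          (Ordinal.bsup j fun i hi => pickPos1 κ A hLe i j hi hj
            (diagQ κ A hlen hLe i))
          (Ordinal.bsup j fun i hi => Ordinal.bsup j fun β hβ =>
            pickPos2 κ A hlen hLe i j hi hj β hβ))
      else 0 :=
  WellFounded.fix_eq _ _ j

include hκlim hlen hLe in
theorem diag (hrefl : ∀ x, r x x) (htrans : ∀ a b c, r a b → r b c → r a c)
    (hκreg : κ.cof.ord = κ) :
    ∃ B : IncChain X r, ∀ j hj, (A j hj).Le B := by
  classical
  set Q := diagQ κ A hlen hLe with hQ
  have hp1lt : ∀ i j (hi : i < j) (hj : j < κ) x,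
      pickPos1 κ A hLe i j hi hj x < κ := by
    intro i j hi hj x
    rw [pickPos1]
    split_ifs with h
    · exact lt_of_lt_of_eq (hLe i j (hi.trans hj) hj hi.le x h).choose_spec.choose (hlen j hj)
    · exact hκlim.pos
  have hp2lt : ∀ i j (hi : i < j) (hj : j < κ) β (hβ : β < j),
      pickPos2 κ A hlen hLe i j hi hj β hβ < κ := by
    intro i j hi hj β hβ
    have := (hLe i j (hi.trans hj) hj hi.le β
      (by rw [hlen]; exact hβ.trans hj)).choose_spec.choose
    exact lt_of_lt_of_eq this (hlen j hj)
  have hQlt : ∀ j, j < κ → Q j < κ := by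
    intro j hj
    rw [hQ, diagQ_eq, dif_pos hj]
    apply hκlim.succ_lt
    apply max_lt
    · exact reg_bsup hκreg hj _ fun i hi => hp1lt i j hi hj _
    · exact reg_bsup hκreg hj _ fun i hi =>
        reg_bsup hκreg hj _ fun β hβ => hp2lt i j hi hj β hβ
  have hpos : ∀ j (hj : j < κ), Q j < (A j hj).len := by
    intro j hj; rw [hlen]; exact hQlt j hj
  set d : ∀ j, j < κ → X := fun j hj => (A j hj).val (Q j) (hpos j hj) with hd
  have hE1 : ∀ i j (hij : i < j) (hj : j < κ),
      pickPos1 κ A hLe i j hij hj (Q i) < Q j := by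
    intro i j hij hj
    rw [hQ, diagQ_eq κ A hlen hLe j, dif_pos hj, Order.lt_succ_iff]
    exact le_trans (Ordinal.le_bsup _ i hij) (le_max_left _ _)
  have hE2 : ∀ i j (hij : i < j) (hj : j < κ) β (hβ : β < j),
      pickPos2 κ A hlen hLe i j hij hj β hβ < Q j := by
    intro i j hij hj β hβ
    rw [hQ, diagQ_eq κ A hlen hLe j, dif_pos hj, Order.lt_succ_iff]
    refine le_trans (Ordinal.le_bsup _ β hβ) ?_
    exact le_trans (Ordinal.le_bsup _ i hij) (le_max_right _ _)
  have hspec1 : ∀ i j (hij : i < j) (hj : j < κ),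
      ∃ (p : Ordinal.{v}) (hp : p < (A j hj).len), p < Q j ∧
        r (d i (hij.trans hj)) ((A j hj).val p hp) := by
    intro i j hij hj
    have hq : Q i < (A i (hij.trans hj)).len := hpos i (hij.trans hj)
    have heqp : pickPos1 κ A hLe i j hij hj (Q i)
        = (hLe i j (hij.trans hj) hj hij.le (Q i) hq).choose := by
      rw [pickPos1, dif_pos hq]
    refine ⟨(hLe i j (hij.trans hj) hj hij.le (Q i) hq).choose,
      (hLe i j (hij.trans hj) hj hij.le (Q i) hq).choose_spec.choose, ?_, ?_⟩
    · rw [← heqp]; exact hE1 i j hij hj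
    · exact (hLe i j (hij.trans hj) hj hij.le (Q i) hq).choose_spec.choose_spec
  have hspec2 : ∀ γ j (hγj : γ < j) (hj : j < κ) β (hβj : β < j)
      (hβ' : β < (A γ (hγj.trans hj)).len),
      ∃ (p : Ordinal.{v}) (hp : p < (A j hj).len), p < Q j ∧
        r ((A γ (hγj.trans hj)).val β hβ') ((A j hj).val p hp) := by
    intro γ j hγj hj β hβj hβ'
    have hβκ : β < (A γ (hγj.trans hj)).len := hβ'
    refine ⟨(hLe γ j (hγj.trans hj) hj hγj.le β
        (by rw [hlen]; exact hβj.trans hj)).choose,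
      (hLe γ j (hγj.trans hj) hj hγj.le β
        (by rw [hlen]; exact hβj.trans hj)).choose_spec.choose, ?_, ?_⟩
    · exact hE2 γ j hγj hj β hβj
    · exact (hLe γ j (hγj.trans hj) hj hγj.le β
        (by rw [hlen]; exact hβj.trans hj)).choose_spec.choose_spec
  have hK1 : ∀ i j (hi : i < κ) (hj : j < κ), i < j →
      r (d i hi) (d j hj) ∧ ¬ r (d j hj) (d i hi) := by
    intro i j hi hj hij
    obtain ⟨p, hp, hpQ, hr⟩ := hspec1 i j hij hj
    have hinc := (A j hj).inc p (Q j) hp (hpos j hj) hpQ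
    constructor
    · exact htrans _ _ _ hr hinc.1
    · intro hcon
      exact hinc.2 (htrans _ _ _ hcon hr)
  have hK3 : ∀ γ j (hγ : γ < j) (hj : j < κ) β (hβ : β < j)
      (hβ' : β < (A γ (hγ.trans hj)).len),
      r ((A γ (hγ.trans hj)).val β hβ') (d j hj) := by
    intro γ j hγ hj β hβ hβ'
    obtain ⟨p, hp, hpQ, hr⟩ := hspec2 γ j hγ hj β hβ hβ'
    have hinc := (A j hj).inc p (Q j) hp (hpos j hj) hpQ
    exact htrans _ _ _ hr hinc.1
  refine ⟨⟨κ, d, fun β γ hβ hγ h => hK1 β γ hβ hγ h⟩, ?_⟩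
  intro γ hγ β hβ
  have hβκ : β < κ := by rw [← hlen γ hγ]; exact hβ
  have hjκ : Order.succ (max γ β) < κ := hκlim.succ_lt (max_lt hγ hβκ)
  have hγj : γ < Order.succ (max γ β) := Order.lt_succ_iff.2 (le_max_left _ _)
  have hβj : β < Order.succ (max γ β) := Order.lt_succ_iff.2 (le_max_right _ _)
  exact ⟨Order.succ (max γ β), hjκ, hK3 γ _ hγj hjκ β hβj hβ⟩

end Diag
/-! ### Upper bound construction for strictly increasing regular lengths -/

section CaseB

variable {X : Type v} {r : X → X → Prop}

theorem caseB (hrefl : ∀ x, r x x) (htrans : ∀ a b c, r a b → r b c → r a c)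
    (δ : Ordinal.{v + 1}) (hδlim : Order.IsSuccLimit δ)
    (A : ∀ γ < δ, IncChain X r)
    (h2 : ∀ i j (hi : i < δ) (hj : j < δ), i < j →
      (A i hi).Le (A j hj) ∧ ¬ (A j hj).Le (A i hi))
    (h3 : ∀ γ hγ, ((A γ hγ).len).cof.ord = (A γ hγ).len)
    (h4 : ∀ i j (hi : i < δ) (hj : j < δ), i < j → (A i hi).len < (A j hj).len)
    (h5 : ∀ γ hγ, γ < Ordinal.lift.{v + 1} ((A γ hγ).len))
    (h6 : ∀ γ hγ, 1 < (A γ hγ).cof) :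
    ∃ B : IncChain X r, ∀ γ hγ, (A γ hγ).Le B := by
  classical
  -- mixed-universe regularity helper
  have hcc : ∀ (x : Ordinal.{v + 1}) (γ : Ordinal.{v + 1}) (hγ : γ < δ),
      x < Ordinal.lift.{v + 1} ((A γ hγ).len) →
      x.card < (Ordinal.lift.{v + 1} ((A γ hγ).len)).cof := by
    intro x γ hγ hx
    have h := Cardinal.lt_ord (c := (Ordinal.lift.{v + 1} ((A γ hγ).len)).cof) (o := x)
    apply h.1
    rw [← Ordinal.lift_cof, ← Cardinal.lift_ord, h3 γ hγ]
    exact hx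
  have hsucc : ∀ j, j < δ → Order.succ j < δ := fun j hj => hδlim.succ_lt hj
  -- key: a single position in `A (succ j)` above the image of everything in `A i`, `i ≤ j`
  have hkey : ∀ j (hj : j < δ),
      ∃ (p : Ordinal.{v}) (hp : p < (A (Order.succ j) (hsucc j hj)).len),
        ∀ i (hi : i < Order.succ j) β (hβ : β < (A i (hi.trans (hsucc j hj))).len),
          ∃ (q : Ordinal.{v}) (hq : q < (A (Order.succ j) (hsucc j hj)).len), q ≤ p ∧
            r ((A i (hi.trans (hsucc j hj))).val β hβ)
              ((A (Order.succ j) (hsucc j hj)).val q hq) := by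
    intro j hj
    have hsj := hsucc j hj
    have hφ : ∀ i (hi : i < Order.succ j) β (hβ : β < (A i (hi.trans hsj)).len),
        ∃ (q : Ordinal.{v}) (hq : q < (A (Order.succ j) hsj).len),
          r ((A i (hi.trans hsj)).val β hβ) ((A (Order.succ j) hsj).val q hq) :=
      fun i hi β hβ => (h2 i (Order.succ j) (hi.trans hsj) hsj hi).1 β hβ
    choose φ hφ1 hφ2 using hφ
    set inner : ∀ i (hi : i < Order.succ j), Ordinal.{v + 1} := fun i hi =>
      Ordinal.bsup.{v + 1, v + 1} (Ordinal.lift.{v + 1} ((A i (hi.trans hsj)).len))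
        (fun lβ hlβ => Ordinal.lift.{v + 1}
          (φ i hi (Ordinal.lt_lift_iff.1 hlβ).choose
            (Ordinal.lt_lift_iff.1 hlβ).choose_spec.1)) with hinner
    set So : Ordinal.{v + 1} :=
      Ordinal.bsup.{v + 1, v + 1} (Order.succ j) inner with hSo
    have hSlt : So < Ordinal.lift.{v + 1} ((A (Order.succ j) hsj).len) := by
      refine Ordinal.bsup_lt_ord (hcc _ _ hsj (h5 _ hsj)) fun i hi => ?_
      refine Ordinal.bsup_lt_ord (hcc _ _ hsj ?_) fun lβ hlβ => ?_
      · exact Ordinal.lift_lt.2 (h4 i (Order.succ j) (hi.trans hsj) hsj hi)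
      · exact Ordinal.lift_lt.2 (hφ1 i hi _ _)
    obtain ⟨p, hpl, hpS⟩ := Ordinal.lt_lift_iff.1 hSlt
    refine ⟨p, hpl, ?_⟩
    intro i hi β hβ
    refine ⟨φ i hi β hβ, hφ1 i hi β hβ, ?_, hφ2 i hi β hβ⟩
    -- `lift (φ i hi β hβ) ≤ So = lift p`
    have hlβ : Ordinal.lift.{v + 1} β < Ordinal.lift.{v + 1} ((A i (hi.trans hsj)).len) :=
      Ordinal.lift_lt.2 hβ
    have hterm : Ordinal.lift.{v + 1}
        (φ i hi (Ordinal.lt_lift_iff.1 hlβ).choose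
          (Ordinal.lt_lift_iff.1 hlβ).choose_spec.1) ≤ inner i hi := by
      rw [hinner]
      exact Ordinal.le_bsup _ (Ordinal.lift.{v + 1} β) hlβ
    have hββ : (Ordinal.lt_lift_iff.1 hlβ).choose = β :=
      Ordinal.lift_inj.1 (Ordinal.lt_lift_iff.1 hlβ).choose_spec.2
    have hfun : ∀ (x y : Ordinal.{v}) (hx : x < (A i (hi.trans hsj)).len)
        (hy : y < (A i (hi.trans hsj)).len), x = y → φ i hi x hx = φ i hi y hy := by
      intro x y hx hy h; subst h; rfl
    rw [hfun _ β _ hβ hββ] at hterm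
    have : Ordinal.lift.{v + 1} (φ i hi β hβ) ≤ So :=
      le_trans hterm (Ordinal.le_bsup _ i hi)
    rw [← hpS] at this
    exact Ordinal.lift_le.1 this
  choose P hP1 hP2 using hkey
  set b : ∀ j, j < δ → X := fun j hj =>
    (A (Order.succ j) (hsucc j hj)).val (P j hj) (hP1 j hj) with hb
  -- F1: `b j` dominates every element of `A i` for `i < succ j`
  have F1 : ∀ j (hj : j < δ) i (hi : i < Order.succ j) β
      (hβ : β < (A i (hi.trans (hsucc j hj))).len),
      r ((A i (hi.trans (hsucc j hj))).val β hβ) (b j hj) := by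
    intro j hj i hi β hβ
    obtain ⟨q, hq, hqle, hr⟩ := hP2 j hj i hi β hβ
    refine htrans _ _ _ hr ?_
    exact IncChain.val_le_val hrefl _ hq (hP1 j hj) hqle
  -- increasing
  have hbinc : ∀ i j (hi : i < δ) (hj : j < δ), i < j →
      r (b i hi) (b j hj) ∧ ¬ r (b j hj) (b i hi) := by
    intro i j hi hj hij
    have hsi : Order.succ i < Order.succ j := Order.succ_lt_succ hij
    constructor
    · exact F1 j hj (Order.succ i) hsi (P i hi) (hP1 i hi)
    · intro hcon
      -- every element of `A j` is below `b i`
      have hdom : ∀ β (hβ : β < (A j hj).len),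
          r ((A j hj).val β hβ) (b i hi) := by
        intro β hβ
        have h1 := F1 j hj j (Order.lt_succ j) β hβ
        exact htrans _ _ _ h1 hcon
      rcases (Order.succ_le_of_lt hij).lt_or_eq with hlt | heq
      · refine (h2 (Order.succ i) j (hsucc i hi) hj hlt).2 ?_
        intro β hβ
        exact ⟨P i hi, hP1 i hi, hdom β hβ⟩
      · -- `b i` is a top element of `A j` itself
        refine absurd (IncChain.cof_le_one_of_top hrefl (B := A j hj) ?_)
          (not_le.2 (h6 j hj))
        subst heq
        exact ⟨P i hi, hP1 i hi, hdom⟩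
  obtain ⟨B, hB⟩ := chain_down hrefl (fun j hj => b j hj) hbinc
  refine ⟨B, ?_⟩
  intro γ hγ β hβ
  obtain ⟨j', hj', hval⟩ := hB γ hγ
  refine ⟨j', hj', ?_⟩
  rw [hval]
  exact F1 γ hγ γ (Order.lt_succ γ) β hβ
end CaseB
namespace IncChain

universe w
variable {X : Type w} {r : X → X → Prop}

theorem val_eq_val (A : IncChain X r) {β β' : Ordinal.{w}} (h : β = β')
    (hβ : β < A.len) (hβ' : β' < A.len) : A.val β hβ = A.val β' hβ' := by
  subst h; rfl

theorem ub_of_cof_not_limit (hrefl : ∀ x, r x x) (htrans : ∀ a b c, r a b → r b c → r a c)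
    (F : IncChain X r) (h : ¬ Order.IsSuccLimit (F.cof)) :
    F.len = 0 ∨ ∃ (γ₀ : Ordinal.{w}) (hγ₀ : γ₀ < F.len),
      ∀ γ hγ, r (F.val γ hγ) (F.val γ₀ hγ₀) := by
  rcases cof_trichotomy hrefl htrans F with h0 | h1 | hl
  · exact Or.inl ((cof_eq_zero_iff hrefl F).1 h0)
  · refine Or.inr (exists_top_of_cof_succ hrefl htrans (s := 0) ?_)
    rw [h1, Ordinal.succ_zero]
  · exact absurd hl h

end IncChain

/-- the following are equivalent for a quasi-ordered set `(X, ≼)`: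
(1) every increasing chain of chains in `IC(X, ≼)` has an upper bound in `IC(X, ≼)`;
(2) every increasing chain of chains `((x^γ_β)_{β<α})_{γ<δ}` whose member chains are all
indexed by the same ordinal `α`, with `α ≠ δ`, `cof((x^γ_β)_{β<α}) = α > 1` for all `γ < δ`,
and `cof(((x^γ_β)_{β<α})_{γ<δ}) = δ > 1`, has an upper bound in `IC(X, ≼)`. -/
theorem stmt4 {X : Type u} {r : X → X → Prop}
    (hrefl : ∀ x, r x x) (htrans : ∀ a b c, r a b → r b c → r a c) :
    (∀ F : IncChain (IncChain X r) IncChain.Le,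
      ∃ B : IncChain X r, ∀ (γ : Ordinal.{u + 1}) (hγ : γ < F.len), (F.val γ hγ).Le B) ↔
    (∀ (F : IncChain (IncChain X r) IncChain.Le) (α : Ordinal.{u}),
      (∀ (γ : Ordinal.{u + 1}) (hγ : γ < F.len), (F.val γ hγ).len = α) →
      (∀ (γ : Ordinal.{u + 1}) (hγ : γ < F.len), (F.val γ hγ).cof = α) →
      F.cof = F.len →
      Ordinal.lift.{u + 1} α ≠ F.len →
      1 < α → 1 < F.len →
      ∃ B : IncChain X r, ∀ (γ : Ordinal.{u + 1}) (hγ : γ < F.len), (F.val γ hγ).Le B) := by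
  constructor
  · intro h1 F α _ _ _ _ _ _
    exact h1 F
  intro H2 F
  classical
  have hR1 : ∀ A : IncChain X r, A.Le A := IncChain.le_refl' hrefl
  have hT1 : ∀ a b c : IncChain X r, a.Le b → b.Le c → a.Le c :=
    fun a b c h h' => IncChain.le_trans' htrans h h'
  by_cases hFlim : Order.IsSuccLimit (F.cof)
  case neg =>
    rcases IncChain.ub_of_cof_not_limit hR1 hT1 F hFlim with h0 | ⟨γ₀, hγ₀, htop⟩
    · exact ⟨IncChain.emptyChain, fun γ hγ => absurd hγ (by rw [h0]; exact not_lt_zero)⟩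
    · exact ⟨F.val γ₀ hγ₀, fun γ hγ => htop γ hγ⟩
  obtain ⟨G0, hG0len, hG0cof⟩ := IncChain.cof_spec hR1 F
  have hδlim : Order.IsSuccLimit G0.len := by rw [hG0len]; exact hFlim
  have hG0c : G0.cof = G0.len := IncChain.cof_of_min hR1 hT1 hG0cof hG0len
  have hδreg : (G0.len).cof.ord = G0.len := IncChain.cof_ord_eq hR1 hG0c hδlim
  have hFleG0 : F.Le G0 := hG0cof.2
  -- trim members
  have htr : ∀ γ (hγ : γ < G0.len), ∃ A' : IncChain X r,
      A'.len = (G0.val γ hγ).cof ∧ A'.Cofinal (G0.val γ hγ) :=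
    fun γ hγ => IncChain.cof_spec hrefl _
  choose T hTlen hTcf using htr
  have hG1inc : ∀ β γ (hβ : β < G0.len) (hγ : γ < G0.len), β < γ →
      (T β hβ).Le (T γ hγ) ∧ ¬ (T γ hγ).Le (T β hβ) := by
    intro β γ hβ hγ h
    have h0 := G0.inc β γ hβ hγ h
    have e1 : (T β hβ).Le (G0.val β hβ) := IncChain.subset_le hrefl (hTcf β hβ).1
    have e2 : (G0.val γ hγ).Le (T γ hγ) := (hTcf γ hγ).2
    constructor
    · exact hT1 _ _ _ (hT1 _ _ _ e1 h0.1) e2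
    · intro hcon
      refine h0.2 (hT1 _ _ _ e2 (hT1 _ _ _ hcon e1))
  set G1 : IncChain (IncChain X r) IncChain.Le := ⟨G0.len, T, hG1inc⟩ with hG1
  have hle01 : ∀ γ hγ, (G0.val γ hγ).Le (T γ hγ) := fun γ hγ => (hTcf γ hγ).2
  have hTcoflen : ∀ γ hγ, (T γ hγ).cof = (T γ hγ).len :=
    fun γ hγ => IncChain.cof_of_min hrefl htrans (hTcf γ hγ) (hTlen γ hγ)
  by_cases hA : ∃ κ : Ordinal.{u}, ∀ η < G0.len, ∃ γ, η ≤ γ ∧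
      ∃ hγ : γ < G0.len, (T γ hγ).len = κ
  case pos =>
    -- CASE A: some length value occurs cofinally often
    obtain ⟨κ, hκ⟩ := hA
    obtain ⟨e, he1, he2⟩ := exists_seq hδreg hδlim
      {γ | ∃ hγ : γ < G0.len, (T γ hγ).len = κ} (fun _ => 0)
      (fun _ _ => hδlim.pos)
      (by intro η hη; obtain ⟨γ, h1, hγ, h3⟩ := hκ η hη; exact ⟨γ, h1, hγ, hγ, h3⟩)
    have hG2inc : ∀ β γ (hβ : β < G0.len) (hγ : γ < G0.len), β < γ →
        (T (e β) (he1 β hβ).1).Le (T (e γ) (he1 γ hγ).1) ∧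
        ¬ (T (e γ) (he1 γ hγ).1).Le (T (e β) (he1 β hβ).1) :=
      fun β γ hβ hγ h => hG1inc _ _ _ _ (he2 β γ h hγ).1
    set G2 : IncChain (IncChain X r) IncChain.Le :=
      ⟨G0.len, fun j hj => T (e j) (he1 j hj).1, hG2inc⟩ with hG2
    have hG2len : ∀ γ hγ, (G2.val γ hγ).len = κ := by
      intro γ hγ
      obtain ⟨h'', hl⟩ := (he1 γ hγ).2.1
      exact hl
    have hG2cof : ∀ γ hγ, (G2.val γ hγ).cof = κ :=
      fun γ hγ => (hTcoflen (e γ) (he1 γ hγ).1).trans (hG2len γ hγ)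
    have hle12 : ∀ γ hγ, (T γ hγ).Le (G2.val γ hγ) := by
      intro γ hγ
      exact IncChain.val_le_val hR1 G1 hγ (he1 γ hγ).1 (he1 γ hγ).2.2
    have hle02 : ∀ γ hγ, (G0.val γ hγ).Le (G2.val γ hγ) :=
      fun γ hγ => hT1 _ _ _ (hle01 γ hγ) (hle12 γ hγ)
    have hκform : κ = 0 ∨ κ = 1 ∨ Order.IsSuccLimit κ := by
      have h01 : (0 : Ordinal.{u + 1}) < G0.len := hδlim.pos
      have := IncChain.cof_trichotomy hrefl htrans (G2.val 0 h01)
      rw [hG2cof 0 h01] at this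
      exact this
    rcases hκform with hκ0 | hκ1 | hκlim
    · -- κ = 0 : impossible
      exfalso
      have h01 : (0 : Ordinal.{u + 1}) < G0.len := hδlim.pos
      have h11 : (1 : Ordinal.{u + 1}) < G0.len := Ordinal.one_lt_of_isSuccLimit hδlim
      refine (G2.inc 0 1 h01 h11 zero_lt_one).2 ?_
      intro β hβ
      rw [hG2len 1 h11, hκ0] at hβ
      exact (not_lt_zero hβ).elim
    · -- κ = 1 : single-element chains
      have hpos0 : ∀ γ (hγ : γ < G0.len), (0 : Ordinal.{u}) < (G2.val γ hγ).len := by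
        intro γ hγ; rw [hG2len γ hγ, hκ1]; exact zero_lt_one
      set bb : ∀ γ, γ < G0.len → X := fun γ hγ => (G2.val γ hγ).val 0 (hpos0 γ hγ) with hbb
      have hbbinc : ∀ i j (hi : i < G0.len) (hj : j < G0.len), i < j →
          r (bb i hi) (bb j hj) ∧ ¬ r (bb j hj) (bb i hi) := by
        intro i j hi hj hij
        have h0 := G2.inc i j hi hj hij
        constructor
        · obtain ⟨q, hq, hr⟩ := h0.1 0 (hpos0 i hi)
          have hq0 : q = 0 := by
            have hq' : q < (1 : Ordinal.{u}) := by rw [← hκ1, ← hG2len j hj]; exact hq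
            exact Ordinal.lt_one_iff_zero.1 hq'
          subst hq0
          exact hr
        · intro hcon
          refine h0.2 ?_
          intro β hβ
          have hβ0 : β = 0 := by
            have hβ' : β < (1 : Ordinal.{u}) := by rw [← hκ1, ← hG2len j hj]; exact hβ
            exact Ordinal.lt_one_iff_zero.1 hβ'
          subst hβ0
          exact ⟨0, hpos0 i hi, hcon⟩
      obtain ⟨B, hB⟩ := chain_down hrefl bb hbbinc
      refine ⟨B, ?_⟩
      intro γ hγ
      obtain ⟨γ1, hγ1, hle1⟩ := hFleG0 γ hγ
      refine hT1 _ _ _ (hT1 _ _ _ hle1 (hle02 γ1 hγ1)) ?_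
      intro β hβ
      have hβ0 : β = 0 := by
        have hβ' : β < (1 : Ordinal.{u}) := by rw [← hκ1, ← hG2len γ1 hγ1]; exact hβ
        exact Ordinal.lt_one_iff_zero.1 hβ'
      subst hβ0
      obtain ⟨j', hj', hval⟩ := hB γ1 hγ1
      exact ⟨j', hj', by rw [hval]; exact hrefl _⟩
    · -- κ limit
      have h01 : (0 : Ordinal.{u + 1}) < G0.len := hδlim.pos
      have hκreg : κ.cof.ord = κ := by
        have h := IncChain.cof_ord_eq hrefl (B := G2.val 0 h01)
          ((hTcoflen (e 0) (he1 0 h01).1).trans rfl)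
          (by rw [hG2len 0 h01]; exact hκlim)
        rw [hG2len 0 h01] at h
        exact h
      obtain ⟨G3, hG3len, hG3cofl⟩ := IncChain.cof_spec hR1 G2
      have hG3c : G3.cof = G3.len := IncChain.cof_of_min hR1 hT1 hG3cofl hG3len
      have hG2leG3 : G2.Le G3 := hG3cofl.2
      have hG3memlen : ∀ γ hγ, (G3.val γ hγ).len = κ := by
        intro γ hγ
        obtain ⟨γ2, hγ2, heq⟩ := hG3cofl.1 γ hγ
        rw [← heq]
        exact hG2len γ2 hγ2
      have hG3memcof : ∀ γ hγ, (G3.val γ hγ).cof = κ := by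
        intro γ hγ
        obtain ⟨γ2, hγ2, heq⟩ := hG3cofl.1 γ hγ
        rw [← heq]
        exact hG2cof γ2 hγ2
      by_cases hδ1lim : Order.IsSuccLimit (G2.cof)
      case neg =>
        rcases IncChain.ub_of_cof_not_limit hR1 hT1 G2 hδ1lim with h0 | ⟨γ₀, hγ₀, htop⟩
        · exact absurd h0 (by show ¬ G0.len = 0; exact hδlim.pos.ne')
        · refine ⟨G2.val γ₀ hγ₀, ?_⟩
          intro γ hγ
          obtain ⟨γ1, hγ1, hle1⟩ := hFleG0 γ hγ
          exact hT1 _ _ _ (hT1 _ _ _ hle1 (hle02 γ1 hγ1)) (htop γ1 hγ1)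
      case pos =>
        have hδ1reg : (G3.len).cof.ord = G3.len :=
          IncChain.cof_ord_eq hR1 hG3c (by rw [hG3len]; exact hδ1lim)
        -- common tail: from a bound on all members of G3, conclude
        have hconc : ∀ B : IncChain X r, (∀ γ hγ, (G3.val γ hγ).Le B) →
            ∀ γ hγ, (F.val γ hγ).Le B := by
          intro B hB γ hγ
          obtain ⟨γ1, hγ1, hle1⟩ := hFleG0 γ hγ
          obtain ⟨γ3, hγ3, hle3⟩ := hG2leG3 γ1 hγ1
          exact IncChain.le_trans' htrans
            (IncChain.le_trans' htrans (hT1 _ _ _ hle1 (hle02 γ1 hγ1)) hle3) (hB γ3 hγ3)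
        by_cases hld : Ordinal.lift.{u + 1} κ = G3.len
        case pos =>
          -- diagonal case
          have hlt : ∀ j : Ordinal.{u}, j < κ → Ordinal.lift.{u + 1} j < G3.len := by
            intro j hj; rw [← hld]; exact Ordinal.lift_lt.2 hj
          set AD : ∀ j, j < κ → IncChain X r :=
            fun j hj => G3.val (Ordinal.lift.{u + 1} j) (hlt j hj) with hAD
          have hADlen : ∀ j hj, (AD j hj).len = κ := fun j hj => hG3memlen _ _
          have hADle : ∀ i j (hi : i < κ) (hj : j < κ), i ≤ j → (AD i hi).Le (AD j hj) := by
            intro i j hi hj hij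
            exact IncChain.val_le_val hR1 G3 (hlt i hi) (hlt j hj) (Ordinal.lift_le.2 hij)
          obtain ⟨B, hB⟩ := diag κ hκlim AD hADlen hADle hrefl htrans hκreg
          refine ⟨B, hconc B ?_⟩
          intro γ hγ
          have hγ' : γ < Ordinal.lift.{u + 1} κ := by rw [hld]; exact hγ
          obtain ⟨j, hj, hlift⟩ := Ordinal.lt_lift_iff.1 hγ'
          have heq : G3.val γ hγ = AD j hj :=
            IncChain.val_eq_val G3 hlift.symm hγ (hlt j hj)
          rw [heq]
          exact hB j hj
        case neg =>
          -- apply the hypothesis (2)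
          have h1κ : 1 < κ := Ordinal.one_lt_of_isSuccLimit hκlim
          have h1δ : 1 < G3.len := by rw [hG3len]; exact Ordinal.one_lt_of_isSuccLimit hδ1lim
          obtain ⟨B, hB⟩ := H2 G3 κ hG3memlen hG3memcof hG3c hld h1κ h1δ
          exact ⟨B, hconc B hB⟩
  case neg =>
    -- CASE B: no length value occurs cofinally often
    push_neg at hA
    set cval : Ordinal.{u + 1} → Ordinal.{u} :=
      fun γ => if h : γ < G0.len then (T γ h).len else 0 with hcval
    have hcval_eq : ∀ γ (hγ : γ < G0.len), cval γ = (T γ hγ).len := by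
      intro γ hγ; rw [hcval]; exact dif_pos hγ
    have hbnd : ∀ κ : Ordinal.{u}, ∃ η, η < G0.len ∧
        ∀ γ (hγ : γ < G0.len), η ≤ γ → (T γ hγ).len ≠ κ := by
      intro κ
      obtain ⟨η, hη, hprop⟩ := hA κ
      exact ⟨η, hη, fun γ hγ hle => hprop γ hle hγ⟩
    choose bnd hbnd1 hbnd2 using hbnd
    obtain ⟨e, he1, he2⟩ := exists_seq hδreg hδlim Set.univ
      (fun γ => bnd (cval γ)) (fun γ _ => hbnd1 _)
      (fun η hη => ⟨η, le_rfl, hη, trivial⟩)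
    have hdist : ∀ i j, i < j → ∀ (hj : j < G0.len),
        cval (e j) ≠ cval (e i) := by
      intro i j hij hj
      have h1 := (he2 i j hij hj).2
      have hej : e j < G0.len := (he1 j hj).1
      rw [hcval_eq (e j) hej]
      exact hbnd2 (cval (e i)) (e j) hej h1
    -- monotone selection
    have hcofT : ∀ η < G0.len, ∃ γ, η ≤ γ ∧ γ < G0.len ∧
        γ ∈ {j | ∀ j' (hj' : j' < G0.len), j ≤ j' → cval (e j) ≤ cval (e j')} := by
      intro η hη
      set V : Set Ordinal.{u} := {v | ∃ j, η ≤ j ∧ ∃ hj : j < G0.len, cval (e j) = v} with hV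
      have hVne : V.Nonempty := ⟨cval (e η), η, le_rfl, hη, rfl⟩
      obtain ⟨j₀, hj₀le, hj₀lt, hj₀val⟩ := csInf_mem hVne
      set W : Set Ordinal.{u + 1} := {j | η ≤ j ∧ j < G0.len ∧ cval (e j) = sInf V} with hW
      have hWne : W.Nonempty := ⟨j₀, hj₀le, hj₀lt, hj₀val⟩
      obtain ⟨hs1, hs2, hs3⟩ := csInf_mem hWne
      refine ⟨sInf W, hs1, hs2, ?_⟩
      intro j' hj' hle
      rw [hs3]
      exact csInf_le' ⟨j', le_trans hs1 hle, hj', rfl⟩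
    obtain ⟨t, ht1, ht2⟩ := exists_seq hδreg hδlim
      {j | ∀ j' (hj' : j' < G0.len), j ≤ j' → cval (e j) ≤ cval (e j')}
      (fun _ => 0) (fun _ _ => hδlim.pos) hcofT
    -- the composed selection g
    set g : Ordinal.{u + 1} → Ordinal.{u + 1} := fun j => e (t j) with hg
    have hglt : ∀ j, j < G0.len → g j < G0.len := fun j hj => (he1 (t j) (ht1 j hj).1).1
    have hgge : ∀ j, j < G0.len → j ≤ g j := by
      intro j hj
      exact le_trans (ht1 j hj).2.2 (he1 (t j) (ht1 j hj).1).2.2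
    have hgmono : ∀ i j, i < j → j < G0.len → g i < g j := by
      intro i j hij hj
      exact (he2 (t i) (t j) (ht2 i j hij hj).1 (ht1 j hj).1).1
    have hcmono : ∀ i j, i < j → j < G0.len → cval (g i) < cval (g j) := by
      intro i j hij hj
      have hle : cval (g i) ≤ cval (g j) :=
        (ht1 i (hij.trans hj)).2.1 (t j) (ht1 j hj).1 ((ht2 i j hij hj).1).le
      have hne : cval (g j) ≠ cval (g i) :=
        hdist (t i) (t j) (ht2 i j hij hj).1 (ht1 j hj).1
      exact lt_of_le_of_ne hle fun h => hne h.symm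
    -- the final family
    have hss : ∀ j, j < G0.len → Order.succ (Order.succ j) < G0.len :=
      fun j hj => hδlim.succ_lt (hδlim.succ_lt hj)
    set AB : ∀ j, j < G0.len → IncChain X r :=
      fun j hj => T (g (Order.succ (Order.succ j))) (hglt _ (hss j hj)) with hAB
    have hABlen : ∀ j (hj : j < G0.len),
        (AB j hj).len = cval (g (Order.succ (Order.succ j))) :=
      fun j hj => (hcval_eq _ _).symm
    have hAB2 : ∀ i j (hi : i < G0.len) (hj : j < G0.len), i < j →
        (AB i hi).Le (AB j hj) ∧ ¬ (AB j hj).Le (AB i hi) := by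
      intro i j hi hj hij
      exact hG1inc _ _ _ _
        (hgmono _ _ (Order.succ_lt_succ (Order.succ_lt_succ hij)) (hss j hj))
    have hAB4 : ∀ i j (hi : i < G0.len) (hj : j < G0.len), i < j →
        (AB i hi).len < (AB j hj).len := by
      intro i j hi hj hij
      rw [hABlen i hi, hABlen j hj]
      exact hcmono _ _ (Order.succ_lt_succ (Order.succ_lt_succ hij)) (hss j hj)
    have h2le : ∀ j (hj : j < G0.len), 1 < (AB j hj).len := by
      intro j hj
      rw [hABlen j hj]
      have hs1 : Order.succ j < G0.len := hδlim.succ_lt hj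
      have hstep1 : cval (g j) < cval (g (Order.succ j)) :=
        hcmono j (Order.succ j) (Order.lt_succ j) hs1
      have hstep2 : cval (g (Order.succ j)) < cval (g (Order.succ (Order.succ j))) :=
        hcmono (Order.succ j) (Order.succ (Order.succ j)) (Order.lt_succ _) (hss j hj)
      have h1le : (1 : Ordinal.{u}) ≤ cval (g (Order.succ j)) :=
        Order.one_le_iff_pos.2 (zero_le.trans_lt hstep1)
      exact lt_of_le_of_lt h1le hstep2
    have hABcoflen : ∀ j (hj : j < G0.len), (AB j hj).cof = (AB j hj).len :=
      fun j hj => hTcoflen _ _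
    have hABlim : ∀ j (hj : j < G0.len), Order.IsSuccLimit ((AB j hj).len) := by
      intro j hj
      rcases IncChain.cof_trichotomy hrefl htrans (AB j hj) with h0 | h1 | hl
      · exfalso
        rw [hABcoflen j hj] at h0
        have h2 := h2le j hj
        rw [h0] at h2
        exact not_lt_zero h2
      · exfalso
        rw [hABcoflen j hj] at h1
        have h2 := h2le j hj
        rw [h1] at h2
        exact lt_irrefl _ h2
      · rwa [hABcoflen j hj] at hl
    have hAB3 : ∀ j (hj : j < G0.len), ((AB j hj).len).cof.ord = (AB j hj).len :=
      fun j hj => IncChain.cof_ord_eq hrefl (hABcoflen j hj) (hABlim j hj)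
    have hliftmono : ∀ i j, i < j → j < G0.len →
        Ordinal.lift.{u + 1} (cval (g i)) < Ordinal.lift.{u + 1} (cval (g j)) :=
      fun i j hij hj => Ordinal.lift_lt.2 (hcmono i j hij hj)
    have hidle : ∀ j, j < G0.len → j ≤ Ordinal.lift.{u + 1} (cval (g j)) :=
      aux_sm_le hliftmono
    have hAB5 : ∀ j (hj : j < G0.len), j < Ordinal.lift.{u + 1} ((AB j hj).len) := by
      intro j hj
      rw [hABlen j hj]
      refine lt_of_le_of_lt (hidle j hj) ?_
      exact hliftmono j (Order.succ (Order.succ j))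
        ((Order.lt_succ j).trans (Order.lt_succ _)) (hss j hj)
    have hAB6 : ∀ j (hj : j < G0.len), 1 < (AB j hj).cof := by
      intro j hj
      rw [hABcoflen j hj]
      exact h2le j hj
    obtain ⟨B, hB⟩ := caseB hrefl htrans G0.len hδlim AB hAB2 hAB3 hAB4 hAB5 hAB6
    refine ⟨B, ?_⟩
    intro γ hγ
    obtain ⟨γ1, hγ1, hle1⟩ := hFleG0 γ hγ
    have hγ1le : γ1 ≤ g (Order.succ (Order.succ γ1)) :=
      le_trans ((Order.le_succ γ1).trans (Order.le_succ _)) (hgge _ (hss γ1 hγ1))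
    have hle2 : (T γ1 hγ1).Le (AB γ1 hγ1) :=
      IncChain.val_le_val hR1 G1 hγ1 (hglt _ (hss γ1 hγ1)) hγ1le
    exact IncChain.le_trans' htrans
      (IncChain.le_trans' htrans
        (IncChain.le_trans' htrans hle1 (hle01 γ1 hγ1)) hle2) (hB γ1 hγ1)
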